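/- Let p ≥ 3 be a prime. Then r_p(F_p^3) ≤ ( 2p^5 - 4p^4 + 2p^3 - p^2 + 4p - 2 - √( 8p^6 - 20p^5 + 17p^4 - 12p^3 + 20p^2 - 16p + 4 ) ) / (2p^2), where the square root is the real square root; that is, every p-progression-free subset S of F_p^3 satisfies |S| ≤ that quantity. -/
import Mathlib

open Finset MvPolynomial

section Helpers

variable {p : ℕ}

/-- dot product on Fin n → ZMod p -/
def dotv {n : ℕ} (a b : Fin n → ZMod p) : ZMod p := ∑ i, a i * b i

lemma dotv_add {n : ℕ} (a b y : Fin n → ZMod p) :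
    dotv (a + b) y = dotv a y + dotv b y := by
  simp [dotv, add_mul, Finset.sum_add_distrib]

lemma dotv_sub {n : ℕ} (a b y : Fin n → ZMod p) :
    dotv (a - b) y = dotv a y - dotv b y := by
  simp [dotv, sub_mul, Finset.sum_sub_distrib]

lemma dotv_smul {n : ℕ} (c : ZMod p) (a y : Fin n → ZMod p) :
    dotv (c • a) y = c * dotv a y := by
  simp [dotv, mul_assoc, Finset.mul_sum]

lemma dotv_add_smul {n : ℕ} (a e y : Fin n → ZMod p) (c : ZMod p) :
    dotv (a + c • e) y = dotv a y + c * dotv e y := by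
  rw [dotv_add, dotv_smul]

lemma dotv_single {n : ℕ} (i : Fin n) (y : Fin n → ZMod p) :
    dotv (Pi.single i 1 : Fin n → ZMod p) y = y i := by
  rw [dotv, Finset.sum_eq_single i]
  · simp
  · intro b _ hb; simp [Pi.single_apply, hb]
  · simp

lemma dotv_smul_single {n : ℕ} (i : Fin n) (c : ZMod p) (y : Fin n → ZMod p) :
    dotv (c • (Pi.single i 1 : Fin n → ZMod p)) y = c * y i := by
  rw [dotv_smul, dotv_single]

lemma dotv_comm {n : ℕ} (a y : Fin n → ZMod p) : dotv a y = dotv y a := by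
  simp [dotv, mul_comm]

lemma single_ne_zero' {n : ℕ} (hp : p.Prime) (i : Fin n) :
    (Pi.single i 1 : Fin n → ZMod p) ≠ 0 := by
  haveI : Fact p.Prime := ⟨hp⟩
  intro h
  have := congrFun h i
  simp at this

/-- Brouwer–Schrijver: a blocking set in AG(2,p) has at least 2p-1 points. -/
lemma blocking_card_ge (hp : p.Prime) (T : Finset (Fin 2 → ZMod p))
    (hT : ∀ a e : Fin 2 → ZMod p, e ≠ 0 → ∃ c : ZMod p, a + c • e ∈ T) :
    2 * p - 1 ≤ T.card := by
  haveI : Fact p.Prime := ⟨hp⟩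
  obtain ⟨c0, hc0⟩ := hT 0 (Pi.single 0 1) (single_ne_zero' hp 0)
  set z : Fin 2 → ZMod p := 0 + c0 • (Pi.single 0 1 : Fin 2 → ZMod p) with hz
  set U : Finset (Fin 2 → ZMod p) := T.image (· - z) with hU
  have hcardU : U.card = T.card := Finset.card_image_of_injective _ (sub_left_injective)
  have h0U : (0 : Fin 2 → ZMod p) ∈ U :=
    Finset.mem_image.2 ⟨z, hc0, sub_self z⟩
  have hUblock : ∀ a e : Fin 2 → ZMod p, e ≠ 0 → ∃ c : ZMod p, a + c • e ∈ U := by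
    intro a e he
    obtain ⟨c, hc⟩ := hT (a + z) e he
    exact ⟨c, Finset.mem_image.2 ⟨a + z + c • e, hc, by ring⟩⟩
  have key : ∀ y : Fin 2 → ZMod p, y ≠ 0 → ∃ b ∈ U.erase 0, dotv b y = 1 := by
    intro y hy
    have hy' : ∃ i, y i ≠ 0 := by
      by_contra h; push_neg at h; exact hy (funext fun i => h i)
    obtain ⟨i, hi⟩ := hy'
    set a : Fin 2 → ZMod p := (y i)⁻¹ • (Pi.single i 1 : Fin 2 → ZMod p) with ha
    have hay : dotv a y = 1 := by rw [ha, dotv_smul_single, inv_mul_cancel₀ hi]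
    set e : Fin 2 → ZMod p := ![y 1, -(y 0)] with he
    have hey : dotv e y = 0 := by
      simp [dotv, he, Fin.sum_univ_two]; ring
    have hene : e ≠ 0 := by
      intro h
      have h0 := congrFun h 0; have h1 := congrFun h 1
      simp [he] at h0 h1
      apply hy; funext j
      fin_cases j
      · simpa using h1
      · simpa using h0
    obtain ⟨c, hc⟩ := hUblock a e hene
    have hdot : dotv (a + c • e) y = 1 := by rw [dotv_add_smul, hay, hey]; ring
    refine ⟨a + c • e, Finset.mem_erase.2 ⟨?_, hc⟩, hdot⟩
    intro h
    rw [h] at hdot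
    simp [dotv] at hdot
  by_contra hlt
  push_neg at hlt
  set P : MvPolynomial (Fin 2) (ZMod p) :=
    ∏ b ∈ U.erase 0, (∑ k, MvPolynomial.C (b k) * MvPolynomial.X k - 1) with hP
  have heval : ∀ y : Fin 2 → ZMod p, MvPolynomial.eval y P = ∏ b ∈ U.erase 0, (dotv b y - 1) := by
    intro y
    rw [hP, map_prod]
    refine Finset.prod_congr rfl fun b _ => ?_
    simp [dotv]
  have hP0 : MvPolynomial.eval 0 P ≠ 0 := by
    rw [heval]
    rw [Finset.prod_congr rfl (fun b _ => by simp [dotv] : ∀ b ∈ U.erase 0, dotv b 0 - 1 = -1)]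
    rw [Finset.prod_const]
    exact pow_ne_zero _ (neg_ne_zero.2 one_ne_zero)
  have hPy : ∀ y : Fin 2 → ZMod p, y ≠ 0 → MvPolynomial.eval y P = 0 := by
    intro y hy
    obtain ⟨b, hb, hb1⟩ := key y hy
    rw [heval]
    exact Finset.prod_eq_zero hb (by rw [hb1]; ring)
  have hdeg : P.totalDegree < (Fintype.card (ZMod p) - 1) * Fintype.card (Fin 2) := by
    rw [ZMod.card p]
    have h1 : P.totalDegree ≤ (U.erase 0).card := by
      calc P.totalDegree ≤ ∑ b ∈ U.erase 0,
            (∑ k, MvPolynomial.C (b k) * MvPolynomial.X k - 1).totalDegree :=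
          MvPolynomial.totalDegree_finset_prod _ _
        _ ≤ ∑ _b ∈ U.erase 0, 1 := by
            refine Finset.sum_le_sum fun b _ => ?_
            have heq : (∑ k, MvPolynomial.C (b k) * MvPolynomial.X k - 1 :
                MvPolynomial (Fin 2) (ZMod p)) =
                ∑ k, MvPolynomial.C (b k) * MvPolynomial.X k + MvPolynomial.C (-1) := by
              simp [sub_eq_add_neg]
            rw [heq]
            refine le_trans (MvPolynomial.totalDegree_add _ _) ?_
            simp only [MvPolynomial.totalDegree_C, max_le_iff]
            constructor
            · refine le_trans (MvPolynomial.totalDegree_finset_sum _ _) ?_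
              refine Finset.sup_le fun k _ => ?_
              refine le_trans (MvPolynomial.totalDegree_mul _ _) ?_
              simp [MvPolynomial.totalDegree_X]
            · omega
        _ = (U.erase 0).card := by simp
    have h2 : (U.erase 0).card = U.card - 1 := Finset.card_erase_of_mem h0U
    have hple : 2 ≤ p := hp.two_le
    simp only [Fintype.card_fin]
    omega
  have hsum := MvPolynomial.sum_eval_eq_zero P hdeg
  rw [Finset.sum_eq_single_of_mem (0 : Fin 2 → ZMod p) (Finset.mem_univ _)
    (fun y _ hy => hPy y hy)] at hsum
  exact hP0 hsum

/-- Each plane meets a line-blocking set of F_p^3 in at least 2p-1 points. -/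
lemma plane_card (hp : p.Prime) (T : Finset (Fin 3 → ZMod p))
    (hT : ∀ a d : Fin 3 → ZMod p, d ≠ 0 → ∃ c : ZMod p, a + c • d ∈ T)
    (g : Fin 3 → ZMod p) (hg : g ≠ 0) (c : ZMod p) :
    2 * p - 1 ≤ (T.filter fun v => dotv v g = c).card := by
  haveI : Fact p.Prime := ⟨hp⟩
  haveI : NeZero p := ⟨hp.pos.ne'⟩
  have hgi : ∃ i, g i ≠ 0 := by
    by_contra h; push_neg at h; exact hg (funext fun i => h i)
  obtain ⟨i, hi⟩ := hgi
  set v₀ : Fin 3 → ZMod p := (c * (g i)⁻¹) • (Pi.single i 1 : Fin 3 → ZMod p) with hv₀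
  have hv₀g : dotv v₀ g = c := by
    rw [hv₀, dotv_smul_single, mul_assoc, inv_mul_cancel₀ hi, mul_one]
  set w : Fin 2 → (Fin 3 → ZMod p) := fun k =>
    g i • (Pi.single (i.succAbove k) 1 : Fin 3 → ZMod p)
      - g (i.succAbove k) • (Pi.single i 1 : Fin 3 → ZMod p) with hw
  have hwg : ∀ k, dotv (w k) g = 0 := by
    intro k
    rw [hw]
    simp only []
    rw [dotv_sub, dotv_smul_single, dotv_smul_single]
    ring
  set u : (Fin 2 → ZMod p) → (Fin 3 → ZMod p) := fun α => α 0 • w 0 + α 1 • w 1 with hu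
  have hug : ∀ α, dotv (u α) g = 0 := by
    intro α
    rw [hu]
    simp only []
    rw [dotv_add, dotv_smul, dotv_smul, hwg, hwg]
    ring
  have husmul : ∀ (α e : Fin 2 → ZMod p) (d : ZMod p), u (α + d • e) = u α + d • u e := by
    intro α e d
    rw [hu]
    simp only [Pi.add_apply, Pi.smul_apply, smul_eq_mul]
    funext m
    simp only [Pi.add_apply, Pi.smul_apply, smul_eq_mul]
    ring
  have hcoord : ∀ (α : Fin 2 → ZMod p) (k : Fin 2), (u α) (i.succAbove k) = α k * g i := by
    intro α k
    have hne : ∀ k' : Fin 2, i.succAbove k' ≠ i := fun k' => Fin.succAbove_ne i k'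
    have hinj : Function.Injective i.succAbove := Fin.succAbove_right_injective
    rw [hu]
    simp only [Pi.add_apply, Pi.smul_apply, smul_eq_mul, hw, Pi.sub_apply]
    fin_cases k <;>
      simp [Pi.single_apply, hne 0, hne 1, hinj.eq_iff] <;>
      try ring
  have huinj : ∀ α β : Fin 2 → ZMod p, u α = u β → α = β := by
    intro α β h
    funext k
    have := congrFun h (i.succAbove k)
    rw [hcoord, hcoord] at this
    exact mul_right_cancel₀ hi this
  have hune : ∀ e : Fin 2 → ZMod p, e ≠ 0 → u e ≠ 0 := by
    intro e he h
    apply he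
    apply huinj
    rw [h]
    funext m
    rw [hu]
    simp
  set T' : Finset (Fin 2 → ZMod p) := Finset.univ.filter (fun α => v₀ + u α ∈ T) with hT'
  have hblock' : ∀ a e : Fin 2 → ZMod p, e ≠ 0 → ∃ d : ZMod p, a + d • e ∈ T' := by
    intro a e he
    obtain ⟨d, hd⟩ := hT (v₀ + u a) (u e) (hune e he)
    refine ⟨d, Finset.mem_filter.2 ⟨Finset.mem_univ _, ?_⟩⟩
    have : v₀ + u (a + d • e) = v₀ + u a + d • u e := by
      rw [husmul]; abel
    rw [this]
    exact hd
  have hBS := blocking_card_ge hp T' hblock'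
  refine le_trans hBS ?_
  apply Finset.card_le_card_of_injOn (fun α => v₀ + u α)
  · intro α hα
    rw [hT'] at hα
    refine Finset.mem_filter.2 ⟨(Finset.mem_filter.1 hα).2, ?_⟩
    rw [dotv_add, hv₀g, hug]
    ring
  · intro α _ β _ h
    exact huinj α β (add_left_cancel h)

/-- Kernel counting: for w ≠ 0, the number of g with dotv w g = 0 is p^2 (n = 3). -/
lemma ker_card [NeZero p] (hp : p.Prime) (w : Fin 3 → ZMod p) (hw : w ≠ 0) :
    (Finset.univ.filter fun g : Fin 3 → ZMod p => dotv w g = 0).card = p ^ 2 := by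
  haveI : Fact p.Prime := ⟨hp⟩
  have hwi : ∃ i, w i ≠ 0 := by
    by_contra h; push_neg at h; exact hw (funext fun i => h i)
  obtain ⟨i, hi⟩ := hwi
  set g₀ : Fin 3 → ZMod p := (w i)⁻¹ • (Pi.single i 1 : Fin 3 → ZMod p) with hg₀
  have hwg₀ : dotv w g₀ = 1 := by
    rw [dotv_comm, hg₀, dotv_smul_single, inv_mul_cancel₀ hi]
  have hfib : ∀ c : ZMod p,
      (Finset.univ.filter fun g : Fin 3 → ZMod p => dotv w g = c).card =
      (Finset.univ.filter fun g : Fin 3 → ZMod p => dotv w g = 0).card := by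
    intro c
    apply Finset.card_bij' (fun g _ => g - c • g₀) (fun g _ => g + c • g₀)
    · intro g hg
      rw [Finset.mem_filter] at hg ⊢
      refine ⟨Finset.mem_univ _, ?_⟩
      have : dotv w (g - c • g₀) = dotv w g - c * dotv w g₀ := by
        rw [dotv_comm, dotv_sub, dotv_smul, dotv_comm g w, dotv_comm g₀ w]
      rw [this, hg.2, hwg₀]
      ring
    · intro g hg
      rw [Finset.mem_filter] at hg ⊢
      refine ⟨Finset.mem_univ _, ?_⟩
      have : dotv w (g + c • g₀) = dotv w g + c * dotv w g₀ := by
        rw [dotv_comm, dotv_add, dotv_smul, dotv_comm g w, dotv_comm g₀ w]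
      rw [this, hg.2, hwg₀]
      ring
    · intro g _; abel
    · intro g _; abel
  have hsum : ∑ c : ZMod p,
      (Finset.univ.filter fun g : Fin 3 → ZMod p => dotv w g = c).card = p ^ 3 := by
    rw [← Finset.card_eq_sum_card_fiberwise (fun g _ => Finset.mem_univ (dotv w g))]
    rw [Finset.card_univ, Fintype.card_fun, ZMod.card, Fintype.card_fin]
  rw [Finset.sum_congr rfl (fun c _ => hfib c), Finset.sum_const, Finset.card_univ,
    ZMod.card, smul_eq_mul] at hsum
  refine Nat.eq_of_mul_eq_mul_left hp.pos (hsum.trans (by ring))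

end Helpers

/-- A subset `S` of `F_p^n` is `k`-progression-free if there are no `a, d` with `d ≠ 0`
such that `a + i • d ∈ S` for all `i ∈ {0, …, k-1}`. -/
def ProgFree (p n k : ℕ) (S : Finset (Fin n → ZMod p)) : Prop :=
  ¬ ∃ a d : Fin n → ZMod p, d ≠ 0 ∧ ∀ i : ℕ, i < k → a + (i : ZMod p) • d ∈ S

set_option maxHeartbeats 2000000 in
theorem stmt_4 (p : ℕ) (hp : p.Prime) (hp3 : 3 ≤ p)
    (S : Finset (Fin 3 → ZMod p)) (hS : ProgFree p 3 p S) :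
    (S.card : ℝ) ≤
      (2 * (p : ℝ) ^ 5 - 4 * (p : ℝ) ^ 4 + 2 * (p : ℝ) ^ 3 - (p : ℝ) ^ 2 + 4 * (p : ℝ) - 2 -
        Real.sqrt (8 * (p : ℝ) ^ 6 - 20 * (p : ℝ) ^ 5 + 17 * (p : ℝ) ^ 4 - 12 * (p : ℝ) ^ 3 +
          20 * (p : ℝ) ^ 2 - 16 * (p : ℝ) + 4)) /
      (2 * (p : ℝ) ^ 2) := by
  haveI : Fact p.Prime := ⟨hp⟩
  haveI : NeZero p := ⟨hp.pos.ne'⟩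
  classical
  set T : Finset (Fin 3 → ZMod p) := Sᶜ with hT
  -- T blocks every line
  have hblock : ∀ a d : Fin 3 → ZMod p, d ≠ 0 → ∃ c : ZMod p, a + c • d ∈ T := by
    intro a d hd
    by_contra hc
    push_neg at hc
    refine hS ⟨a, d, hd, fun i _ => ?_⟩
    have := hc ((i : ZMod p))
    rw [hT, Finset.mem_compl, not_not] at this
    exact this
  set t : ℕ := T.card with ht
  -- the fiber counts
  set A : (Fin 3 → ZMod p) → ZMod p → ℕ :=
    fun g c => (T.filter fun v => dotv v g = c).card with hA
  set G : Finset (Fin 3 → ZMod p) := Finset.univ.filter (fun g => g ≠ 0) with hG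
  have hGcard : G.card = p ^ 3 - 1 := by
    rw [hG, Finset.filter_ne', Finset.card_erase_of_mem (Finset.mem_univ _),
      Finset.card_univ, Fintype.card_fun, ZMod.card, Fintype.card_fin]
  have hcardZmodp : Fintype.card (ZMod p) = p := ZMod.card p
  -- per-g fiber sum
  have hS1 : ∀ g : Fin 3 → ZMod p, ∑ c : ZMod p, A g c = t :=
    fun g => (Finset.card_eq_sum_card_fiberwise
      (fun v _ => Finset.mem_univ (dotv v g))).symm
  -- lower bound on each fiber
  have hAlb : ∀ g ∈ G, ∀ c : ZMod p, 2 * p - 1 ≤ A g c := by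
    intro g hg c
    exact plane_card hp T hblock g ((Finset.mem_filter.1 hg).2) c
  -- upper bound on each fiber
  have hAub : ∀ g ∈ G, ∀ c : ZMod p, A g c + (p - 1) * (2 * p - 1) ≤ t := by
    intro g hg c
    have h1 : t = A g c + ∑ c' ∈ Finset.univ.erase c, A g c' := by
      rw [← hS1 g, Finset.add_sum_erase _ _ (Finset.mem_univ c)]
    have h2 : (Finset.univ.erase c).card • (2 * p - 1) ≤ ∑ c' ∈ Finset.univ.erase c, A g c' :=
      Finset.card_nsmul_le_sum _ _ _ (fun c' _ => hAlb g hg c')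
    rw [Finset.card_erase_of_mem (Finset.mem_univ _), Finset.card_univ, hcardZmodp,
      smul_eq_mul] at h2
    omega
  -- second-moment identity, per g
  have hS2g : ∀ g : Fin 3 → ZMod p, ∑ c : ZMod p, (A g c) ^ 2 =
      ((T ×ˢ T).filter fun uv => dotv uv.1 g = dotv uv.2 g).card := by
    intro g
    rw [Finset.card_eq_sum_card_fiberwise
      (f := fun uv => dotv uv.1 g) (t := Finset.univ) (fun uv _ => Finset.mem_univ _)]
    refine Finset.sum_congr rfl fun c _ => ?_
    have hfib : ((T ×ˢ T).filter fun uv => dotv uv.1 g = dotv uv.2 g).filter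
        (fun uv => dotv uv.1 g = c) =
        (T.filter fun v => dotv v g = c) ×ˢ (T.filter fun v => dotv v g = c) := by
      ext ab
      simp only [Finset.filter_filter, Finset.mem_filter, Finset.mem_product]
      constructor
      · rintro ⟨⟨ha, hb⟩, he, hc⟩
        exact ⟨⟨ha, hc⟩, hb, by rw [← he]; exact hc⟩
      · rintro ⟨⟨ha, hac⟩, hb, hbc⟩
        exact ⟨⟨ha, hb⟩, by rw [hac, hbc], hac⟩
    rw [hfib, Finset.card_product, hA]
    ring
  -- swap the order of summation
  have hswap : ∑ g ∈ G, (((T ×ˢ T).filter fun uv => dotv uv.1 g = dotv uv.2 g).card)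
      = ∑ uv ∈ T ×ˢ T, (G.filter fun g => dotv uv.1 g = dotv uv.2 g).card := by
    simp only [Finset.card_filter]
    exact Finset.sum_comm
  -- point-pair counts
  have hpair : ∀ uv : (Fin 3 → ZMod p) × (Fin 3 → ZMod p),
      (G.filter fun g => dotv uv.1 g = dotv uv.2 g).card
        = if uv.1 = uv.2 then p ^ 3 - 1 else p ^ 2 - 1 := by
    rintro ⟨u, v⟩
    by_cases huv : u = v
    · rw [if_pos huv]
      have heq : (G.filter fun g => dotv u g = dotv v g) = G :=
        Finset.filter_true_of_mem (fun g _ => by rw [huv])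
      rw [heq, hGcard]
    · simp only [if_neg huv]
      have hker : ∀ g : Fin 3 → ZMod p, (dotv u g = dotv v g) ↔ dotv (u - v) g = 0 := by
        intro g
        rw [dotv_sub, sub_eq_zero]
      have hmem : G.filter (fun g => dotv u g = dotv v g) =
          (Finset.univ.filter fun g : Fin 3 → ZMod p => dotv (u - v) g = 0).erase 0 := by
        ext g
        simp only [Finset.mem_filter, Finset.mem_erase, hG, Finset.mem_univ, true_and,
          Finset.filter_filter]
        rw [hker g]
      rw [hmem, Finset.card_erase_of_mem, ker_card hp (u - v) (sub_ne_zero.2 huv)]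
      refine Finset.mem_filter.2 ⟨Finset.mem_univ _, ?_⟩
      simp [dotv]
  -- total second moment
  have hdiag : ((T ×ˢ T).filter fun uv => uv.1 = uv.2).card = t := by
    have himg : (T ×ˢ T).filter (fun uv => uv.1 = uv.2) = T.image (fun u => (u, u)) := by
      ext uv
      simp only [Finset.mem_filter, Finset.mem_product, Finset.mem_image]
      constructor
      · rintro ⟨⟨h1, h2⟩, h3⟩
        exact ⟨uv.1, h1, by rw [Prod.ext_iff]; exact ⟨rfl, h3⟩⟩
      · rintro ⟨a, ha, rfl⟩
        exact ⟨⟨ha, ha⟩, rfl⟩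
    rw [himg, Finset.card_image_of_injective _ (fun a b h => (Prod.ext_iff.1 h).1)]
  have hoff : ((T ×ˢ T).filter fun uv => ¬ uv.1 = uv.2).card = t * t - t := by
    have := Finset.card_filter_add_card_filter_not
      (s := T ×ˢ T) (p := fun uv => uv.1 = uv.2)
    rw [Finset.card_product, hdiag, ← ht] at this
    omega
  have hS2 : ∑ g ∈ G, ∑ c : ZMod p, (A g c) ^ 2
      = t * (p ^ 3 - 1) + (t * t - t) * (p ^ 2 - 1) := by
    rw [Finset.sum_congr rfl (fun g _ => hS2g g), hswap,
      Finset.sum_congr rfl (fun uv _ => hpair uv), Finset.sum_ite, Finset.sum_const,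
      Finset.sum_const, hdiag, hoff, smul_eq_mul, smul_eq_mul]
  -- Jamison sum bound
  have hI2 : p * (2 * p - 1) ≤ t := by
    have hg0 : (Pi.single 0 1 : Fin 3 → ZMod p) ∈ G :=
      Finset.mem_filter.2 ⟨Finset.mem_univ _, single_ne_zero' hp 0⟩
    have h2 : (Finset.univ : Finset (ZMod p)).card • (2 * p - 1)
        ≤ ∑ c : ZMod p, A (Pi.single 0 1) c :=
      Finset.card_nsmul_le_sum _ _ _ (fun c _ => hAlb _ hg0 c)
    rw [Finset.card_univ, hcardZmodp, smul_eq_mul, hS1] at h2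
    exact h2
  -- move to ℤ
  have hxt : S.card + t = p ^ 3 := by
    rw [ht, hT, Finset.card_add_card_compl, Fintype.card_fun, ZMod.card, Fintype.card_fin]
  set m : ℤ := 2 * (p : ℤ) - 1 with hm
  set M : ℤ := (t : ℤ) - ((p : ℤ) - 1) * m with hM
  have hAlbZ : ∀ g ∈ G, ∀ c : ZMod p, m ≤ (A g c : ℤ) := by
    intro g hg c
    have h := hAlb g hg c
    have hple : 1 ≤ 2 * p := by omega
    zify [hple] at h
    rw [hm]
    exact h
  have hAubZ : ∀ g ∈ G, ∀ c : ZMod p, (A g c : ℤ) ≤ M := by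
    intro g hg c
    have h := hAub g hg c
    have hple : 1 ≤ 2 * p := by omega
    have hp1 : 1 ≤ p := by omega
    zify [hple, hp1] at h
    rw [hM, hm]
    linarith
  -- the master inequality over ℤ
  have hmain : (0 : ℤ) ≤ ((p : ℤ) ^ 3 - 1) * ((m + M) * (t : ℤ) - (p : ℤ) * (m * M))
      - ((t : ℤ) * ((p : ℤ) ^ 3 - 1) + ((t : ℤ) * (t : ℤ) - (t : ℤ)) * ((p : ℤ) ^ 2 - 1)) := by
    have hnn : (0 : ℤ) ≤ ∑ g ∈ G, ∑ c : ZMod p, ((A g c : ℤ) - m) * (M - (A g c : ℤ)) := by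
      refine Finset.sum_nonneg fun g hg => Finset.sum_nonneg fun c _ => ?_
      exact mul_nonneg (by linarith [hAlbZ g hg c]) (by linarith [hAubZ g hg c])
    have hinner : ∀ g ∈ G, ∑ c : ZMod p, ((A g c : ℤ) - m) * (M - (A g c : ℤ))
        = ((m + M) * (t : ℤ) - (p : ℤ) * (m * M)) - ∑ c : ZMod p, (A g c : ℤ) ^ 2 := by
      intro g hg
      have e1 : ∑ c : ZMod p, ((A g c : ℤ) - m) * (M - (A g c : ℤ))
          = (m + M) * (∑ c : ZMod p, (A g c : ℤ)) - (∑ c : ZMod p, (A g c : ℤ) ^ 2)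
            - (Finset.univ : Finset (ZMod p)).card * (m * M) := by
        rw [Finset.mul_sum, ← Finset.sum_sub_distrib]
        rw [show ((Finset.univ : Finset (ZMod p)).card : ℤ) * (m * M)
            = ∑ _c : ZMod p, m * M by rw [Finset.sum_const, nsmul_eq_mul]]
        rw [← Finset.sum_sub_distrib]
        exact Finset.sum_congr rfl fun c _ => by ring
      have e2 : ∑ c : ZMod p, (A g c : ℤ) = (t : ℤ) := by
        rw [← Nat.cast_sum]
        exact_mod_cast congrArg (Nat.cast : ℕ → ℤ) (hS1 g)
      rw [e1, e2, Finset.card_univ, hcardZmodp]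
      ring
    rw [Finset.sum_congr rfl hinner, Finset.sum_sub_distrib, Finset.sum_const,
      nsmul_eq_mul, hGcard] at hnn
    have hS2Z : ∑ g ∈ G, ∑ c : ZMod p, (A g c : ℤ) ^ 2
        = (t : ℤ) * ((p : ℤ) ^ 3 - 1) + ((t : ℤ) * (t : ℤ) - (t : ℤ)) * ((p : ℤ) ^ 2 - 1) := by
      have h := hS2
      have h1 : 1 ≤ p ^ 3 := Nat.one_le_pow _ _ hp.pos
      have h2 : 1 ≤ p ^ 2 := Nat.one_le_pow _ _ hp.pos
      have h3 : t ≤ t * t := by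
        rcases Nat.eq_zero_or_pos t with h0 | h0
        · simp [h0]
        · exact Nat.le_mul_of_pos_left t h0
      zify [h1, h2, h3] at h
      push_cast at h ⊢
      linarith
    have h1 : 1 ≤ p ^ 3 := Nat.one_le_pow _ _ hp.pos
    push_cast [h1] at hnn
    rw [hS2Z] at hnn
    linarith
  -- cast the remaining facts to ℝ
  have hI2R : (p : ℝ) * (2 * (p : ℝ) - 1) ≤ (t : ℝ) := by
    have hple : 1 ≤ 2 * p := by omega
    zify [hple] at hI2
    exact_mod_cast hI2
  have hxtR : (S.card : ℝ) + (t : ℝ) = (p : ℝ) ^ 3 := by exact_mod_cast hxt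
  have hmainR : (0 : ℝ) ≤ ((p : ℝ) ^ 3 - 1) *
        (((2 * (p : ℝ) - 1) + ((t : ℝ) - ((p : ℝ) - 1) * (2 * (p : ℝ) - 1))) * (t : ℝ)
          - (p : ℝ) * ((2 * (p : ℝ) - 1) * ((t : ℝ) - ((p : ℝ) - 1) * (2 * (p : ℝ) - 1))))
      - ((t : ℝ) * ((p : ℝ) ^ 3 - 1)
          + ((t : ℝ) * (t : ℝ) - (t : ℝ)) * ((p : ℝ) ^ 2 - 1)) := by
    rw [hm, hM] at hmain
    exact_mod_cast hmain
  -- final algebra over ℝ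
  set P : ℝ := (p : ℝ) with hP
  have hP3 : (3 : ℝ) ≤ P := by rw [hP]; exact_mod_cast hp3
  set X : ℝ := (S.card : ℝ) with hX
  have htR : (t : ℝ) = P ^ 3 - X := by linarith
  rw [htR] at hmainR hI2R
  -- the quadratic inequality in X
  have hquad : 0 ≤ P ^ 2 * X ^ 2
      - (2 * P ^ 5 - 4 * P ^ 4 + 2 * P ^ 3 - P ^ 2 + 4 * P - 2) * X
      + (P ^ 8 - 4 * P ^ 7 + 6 * P ^ 6 - 5 * P ^ 5 + 5 * P ^ 4 - 6 * P ^ 3 + 4 * P ^ 2 - P) := by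
    have hid : ((P : ℝ) ^ 3 - 1) *
        (((2 * P - 1) + ((P ^ 3 - X) - (P - 1) * (2 * P - 1))) * (P ^ 3 - X)
          - P * ((2 * P - 1) * ((P ^ 3 - X) - (P - 1) * (2 * P - 1))))
      - ((P ^ 3 - X) * (P ^ 3 - 1) + ((P ^ 3 - X) * (P ^ 3 - X) - (P ^ 3 - X)) * (P ^ 2 - 1))
      = (P - 1) * (P ^ 2 * X ^ 2
        - (2 * P ^ 5 - 4 * P ^ 4 + 2 * P ^ 3 - P ^ 2 + 4 * P - 2) * X
        + (P ^ 8 - 4 * P ^ 7 + 6 * P ^ 6 - 5 * P ^ 5 + 5 * P ^ 4 - 6 * P ^ 3 + 4 * P ^ 2 - P)) := by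
      ring
    rw [hid] at hmainR
    have hP1 : (0 : ℝ) < P - 1 := by linarith
    nlinarith [hmainR, hP1]
  have hXle : X ≤ P ^ 3 - 2 * P ^ 2 + P := by nlinarith [hI2R]
  -- discriminant facts
  have hP0 : (0 : ℝ) < P := by linarith
  obtain ⟨D, hD⟩ : ∃ D : ℝ, D = 8 * P ^ 6 - 20 * P ^ 5 + 17 * P ^ 4 - 12 * P ^ 3
      + 20 * P ^ 2 - 16 * P + 4 := ⟨_, rfl⟩
  obtain ⟨B, hB⟩ : ∃ B : ℝ, B = 2 * P ^ 5 - 4 * P ^ 4 + 2 * P ^ 3 - P ^ 2 + 4 * P - 2 :=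
    ⟨_, rfl⟩
  have hDnn : 0 ≤ D := by
    rw [hD]
    nlinarith [mul_nonneg (mul_nonneg (pow_pos hP0 5).le (by linarith : (0:ℝ) ≤ P - 3))
        (by norm_num : (0:ℝ) ≤ 8),
      mul_nonneg (pow_pos hP0 5).le (by norm_num : (0:ℝ) ≤ 4),
      mul_nonneg (pow_pos hP0 3).le (by linarith : (0:ℝ) ≤ 17 * P - 12),
      mul_nonneg hP0.le (by linarith : (0:ℝ) ≤ 5 * P - 4)]
  have hgap : (P ^ 2 - 4 * P + 2) ^ 2 < D := by
    rw [hD]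
    have hfac : (0:ℝ) < 4 * P ^ 3 * (P - 1) ^ 2 * (2 * P - 1) := by
      have h1 := pow_pos hP0 3
      have h2 : (0:ℝ) < (P - 1) ^ 2 := pow_pos (by linarith) 2
      nlinarith
    nlinarith [hfac]
  obtain ⟨s, hs⟩ : ∃ s : ℝ, s = Real.sqrt D := ⟨_, rfl⟩
  have hs0 : 0 ≤ s := hs ▸ Real.sqrt_nonneg _
  have hss : s ^ 2 = D := by rw [hs]; exact Real.sq_sqrt hDnn
  -- conclude
  have hu2 : D ≤ (B - 2 * P ^ 2 * X) ^ 2 := by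
    have h4q : (0:ℝ) ≤ 4 * P ^ 2 * (P ^ 2 * X ^ 2
        - (2 * P ^ 5 - 4 * P ^ 4 + 2 * P ^ 3 - P ^ 2 + 4 * P - 2) * X
        + (P ^ 8 - 4 * P ^ 7 + 6 * P ^ 6 - 5 * P ^ 5 + 5 * P ^ 4 - 6 * P ^ 3 + 4 * P ^ 2 - P)) :=
      mul_nonneg (by positivity) hquad
    rw [hB, hD]
    nlinarith [h4q]
  have hu_low : -(P ^ 2) + 4 * P - 2 ≤ B - 2 * P ^ 2 * X := by
    have h2 := mul_le_mul_of_nonneg_left hXle (by positivity : (0:ℝ) ≤ 2 * P ^ 2)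
    rw [hB]
    nlinarith [h2]
  have hsu : s ≤ B - 2 * P ^ 2 * X := by
    by_contra hcon
    push_neg at hcon
    have h1 : s + (B - 2 * P ^ 2 * X) ≤ 0 := by nlinarith [hu2, hss, hcon]
    have hW : s ≤ P ^ 2 - 4 * P + 2 := by linarith
    have hW2 : s ^ 2 ≤ (P ^ 2 - 4 * P + 2) ^ 2 := by nlinarith [hW, hs0]
    rw [hss] at hW2
    linarith [hgap]
  rw [le_div_iff₀ (by positivity : (0:ℝ) < 2 * (p : ℝ) ^ 2)]
  have hrw : 2 * P ^ 5 - 4 * P ^ 4 + 2 * P ^ 3 - P ^ 2 + 4 * P - 2 -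
        Real.sqrt (8 * P ^ 6 - 20 * P ^ 5 + 17 * P ^ 4 - 12 * P ^ 3 +
          20 * P ^ 2 - 16 * P + 4) = B - s := by
    rw [hB, hs, hD]
  rw [hrw]
  linarith
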